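/- arXiv:1704.01609 — 4 statements merged into one kernel-verified Lean document; each statement's English description precedes it below -/
import Mathlib

section
/- For every α, β ∈ ℝ and every z ∈ ℂ with z ≠ 1, setting X = −(1/2)·!![exp(i(β+α)), exp(−i(β+α)); exp(−i(β−α)), exp(i(β−α))], M₀ = !![1, −1; −1, 1], and V = !![exp(−iα), 0; 0, exp(iα)] (2×2 complex matrices, I the 2×2 identity), one has I − z·I − Xᴴ·(I − z·I)⁻¹·X = (cos 2β/(2(1−z)))·V·M₀·Vᴴ − ((−2z² + 4z − 1 + cos 2β)/(2(1−z)))·I; note V·M₀·Vᴴ = !![1, −exp(−2iα); −exp(2iα), 1]. -/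
open Complex Matrix

/-- Schur-complement computation for the magnetic operator of a single diamond cell with
flux `4β` and gauge shift `α` between the two paths: the reduced operator is the gauge
transform by `V` of the reduced operator of the symmetric gauge. -/
theorem stmt1 (α β : ℝ) (z : ℂ) (hz : z ≠ 1)
    (X : Matrix (Fin 2) (Fin 2) ℂ)
    (hX : X = -((1 / 2 : ℂ)) •
      !![Complex.exp (Complex.I * (β + α)), Complex.exp (-(Complex.I * (β + α)));
         Complex.exp (-(Complex.I * (β - α))), Complex.exp (Complex.I * (β - α))])
    (M₀ : Matrix (Fin 2) (Fin 2) ℂ) (hM₀ : M₀ = !![1, -1; -1, 1])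
    (V : Matrix (Fin 2) (Fin 2) ℂ)
    (hV : V = !![Complex.exp (-(Complex.I * α)), 0; 0, Complex.exp (Complex.I * α)]) :
    (1 : Matrix (Fin 2) (Fin 2) ℂ) - z • (1 : Matrix (Fin 2) (Fin 2) ℂ) -
        Xᴴ * ((1 : Matrix (Fin 2) (Fin 2) ℂ) - z • (1 : Matrix (Fin 2) (Fin 2) ℂ))⁻¹ * X =
      (((Real.cos (2 * β) : ℝ) : ℂ) / (2 * (1 - z))) • (V * M₀ * Vᴴ) -
        ((-2 * z ^ 2 + 4 * z - 1 + ((Real.cos (2 * β) : ℝ) : ℂ)) / (2 * (1 - z))) •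
          (1 : Matrix (Fin 2) (Fin 2) ℂ) ∧
    V * M₀ * Vᴴ =
      !![1, -Complex.exp (-(2 * Complex.I * α)); -Complex.exp (2 * Complex.I * α), 1] := by
  have hz' : (1 : ℂ) - z ≠ 0 := sub_ne_zero.mpr (Ne.symm hz)
  have h1 : (1 : Matrix (Fin 2) (Fin 2) ℂ) - z • (1 : Matrix (Fin 2) (Fin 2) ℂ) =
      ((1 - z : ℂ)) • (1 : Matrix (Fin 2) (Fin 2) ℂ) := by
    rw [sub_smul, one_smul]
  have hinv : ((1 : Matrix (Fin 2) (Fin 2) ℂ) - z • (1 : Matrix (Fin 2) (Fin 2) ℂ))⁻¹ =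
      ((1 - z)⁻¹ : ℂ) • (1 : Matrix (Fin 2) (Fin 2) ℂ) := by
    rw [h1]
    apply Matrix.inv_eq_right_inv
    rw [smul_mul_smul_comm, one_mul, mul_inv_cancel₀ hz', one_smul]
  set a := Complex.exp (Complex.I * β) with ha
  set a' := Complex.exp (-(Complex.I * β)) with ha'
  set b := Complex.exp (Complex.I * α) with hb
  set b' := Complex.exp (-(Complex.I * α)) with hb'
  have haa : a * a' = 1 := by
    rw [ha, ha', ← Complex.exp_add, add_neg_cancel, Complex.exp_zero]
  have hbb : b * b' = 1 := by
    rw [hb, hb', ← Complex.exp_add, add_neg_cancel, Complex.exp_zero]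
  have hbb' : b' * b = 1 := by rw [mul_comm]; exact hbb
  have haa' : a' * a = 1 := by rw [mul_comm]; exact haa
  have hcos : ((Real.cos (2 * β) : ℝ) : ℂ) = (a ^ 2 + a' ^ 2) / 2 := by
    rw [Complex.ofReal_cos]
    have h := Complex.two_cos (x := ((2 * β : ℝ) : ℂ))
    have h1 : Complex.exp (((2 * β : ℝ) : ℂ) * Complex.I) = a ^ 2 := by
      rw [ha, sq, ← Complex.exp_add]; congr 1; push_cast; ring
    have h2 : Complex.exp (-((2 * β : ℝ) : ℂ) * Complex.I) = a' ^ 2 := by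
      rw [ha', sq, ← Complex.exp_add]; congr 1; push_cast; ring
    rw [h1, h2] at h
    linear_combination h / 2
  have f1 : Complex.exp (Complex.I * ((β:ℂ) + (α:ℂ))) = a * b := by
    rw [ha, hb, ← Complex.exp_add]; congr 1; ring
  have f2 : Complex.exp (-(Complex.I * ((β:ℂ) + (α:ℂ)))) = a' * b' := by
    rw [ha', hb', ← Complex.exp_add]; congr 1; ring
  have f3 : Complex.exp (-(Complex.I * ((β:ℂ) - (α:ℂ)))) = a' * b := by
    rw [ha', hb, ← Complex.exp_add]; congr 1; ring
  have f4 : Complex.exp (Complex.I * ((β:ℂ) - (α:ℂ))) = a * b' := by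
    rw [ha, hb', ← Complex.exp_add]; congr 1; ring
  have hX' : X = -((1 / 2 : ℂ)) • !![a * b, a' * b'; a' * b, a * b'] := by
    rw [hX, f1, f2, f3, f4]
  have hsb : (starRingEnd ℂ) b = b' := by
    rw [hb, hb', ← Complex.exp_conj]; congr 1
    simp [Complex.conj_ofReal]
  have hsb' : (starRingEnd ℂ) b' = b := by
    rw [hb, hb', ← Complex.exp_conj]; congr 1
    simp [Complex.conj_ofReal]
  have hsa : (starRingEnd ℂ) a = a' := by
    rw [ha, ha', ← Complex.exp_conj]; congr 1
    simp [Complex.conj_ofReal]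
  have hsa' : (starRingEnd ℂ) a' = a := by
    rw [ha, ha', ← Complex.exp_conj]; congr 1
    simp [Complex.conj_ofReal]
  have e1 : Complex.exp (2 * Complex.I * α) = b ^ 2 := by
    rw [hb, sq, ← Complex.exp_add]; congr 1; ring
  have e2 : Complex.exp (-(2 * Complex.I * α)) = b' ^ 2 := by
    rw [hb', sq, ← Complex.exp_add]; congr 1; ring
  clear_value a a' b b'
  have hVM : V * M₀ * Vᴴ =
      !![1, -Complex.exp (-(2 * Complex.I * α)); -Complex.exp (2 * Complex.I * α), 1] := by
    rw [hV, hM₀, e1, e2]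
    ext i j
    fin_cases i <;> fin_cases j <;>
      simp [Matrix.mul_apply, Fin.sum_univ_succ, hsb, hsb']
    all_goals first
      | ring1
      | exact hbb
      | exact hbb'
  refine ⟨?_, hVM⟩
  have hXH : Xᴴ = -((1 / 2 : ℂ)) • !![a' * b', a * b'; a * b, a' * b] := by
    rw [hX']
    ext i j
    fin_cases i <;> fin_cases j <;>
      simp [Matrix.conjTranspose_apply, hsa, hsa', hsb, hsb'] <;> ring
  have hprod : Xᴴ * X =
      !![(1 : ℂ) / 2, (a ^ 2 + a' ^ 2) * b' ^ 2 / 4;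
         (a ^ 2 + a' ^ 2) * b ^ 2 / 4, (1 : ℂ) / 2] := by
    rw [hXH, hX']
    ext i j
    fin_cases i <;> fin_cases j <;>
      simp [Matrix.mul_apply, Fin.sum_univ_succ]
    all_goals first
      | ring1
      | linear_combination ((1 : ℂ)/2) * b * b' * haa + ((1 : ℂ)/2) * hbb
  rw [hinv, Matrix.mul_smul, Matrix.mul_one, Matrix.smul_mul, hprod, h1, hVM, hcos, e1, e2]
  ext i j
  fin_cases i <;> fin_cases j <;>
    simp [Matrix.smul_apply, Matrix.sub_apply, Matrix.one_apply] <;>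
    field_simp
  all_goals first | exact Or.inl trivial | ring1 | (left; ring1)
end

section
/- Under the gluing hypotheses (1)–(3), let M^w be a bounded operator on U^w for each w ∈ W, set M = Σ_w L^w M^w R^w, and let Q (resp. Q^w) denote the compression P₁MP₁ restricted to U₁ (resp. P^w₁M^wP^w₁ restricted to U^w₁). If z ∈ ℂ is such that Q^w − z is invertible on U^w₁ for every w ∈ W, then Q − z is invertible on U₁ and its inverse is the restriction to U₁ of Σ_w L^w ∘ P^w₁ ∘ (Q^w − z)⁻¹ ∘ P^w₁ ∘ R^w. -/
open ContinuousLinearMap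

/-- Gluing lemma, invertibility of `Q − z` on `U₁`:
given the gluing hypotheses (1)–(3), operators `M^w` on the subspaces `U^w`,
and for each `w` an inverse `B^w` of `Q^w − z` on `U^w₁` (encoded as an operator on `U^w`
supported on `U^w₁`), the operator `Q − z` is invertible on `U₁` with inverse the
restriction to `U₁` of `Σ_w L^w ∘ P^w₁ ∘ (Q^w − z)⁻¹ ∘ P^w₁ ∘ R^w` (encoded as an operator
on `U` supported on `U₁`). -/
theorem stmt2
    {U : Type*} [NormedAddCommGroup U] [InnerProductSpace ℂ U] [CompleteSpace U]
    {W : Type*} [Fintype W]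
    -- orthogonal decomposition U = U₀ ⊕ U₁ via orthogonal projections P₀, P₁
    (P₀ P₁ : U →L[ℂ] U)
    (hP₀sa : IsSelfAdjoint P₀) (hP₀idem : P₀ ∘L P₀ = P₀) (hPsum : P₀ + P₁ = 1)
    -- the closed subspaces U^w, invariant under P₀ and P₁
    (Uw : W → Submodule ℂ U) (hUwc : ∀ w, IsClosed (Uw w : Set U))
    (hUw0 : ∀ w, ∀ x ∈ Uw w, P₀ x ∈ Uw w) (hUw1 : ∀ w, ∀ x ∈ Uw w, P₁ x ∈ Uw w)
    -- the projections P^w₀, P^w₁ of U^w onto U^w₀, U^w₁ (the restrictions of P₀, P₁)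
    (Pw0 Pw1 : (w : W) → Uw w →L[ℂ] Uw w)
    (hPw0 : ∀ w, (Uw w).subtypeL ∘L Pw0 w = P₀ ∘L (Uw w).subtypeL)
    (hPw1 : ∀ w, (Uw w).subtypeL ∘L Pw1 w = P₁ ∘L (Uw w).subtypeL)
    -- the gluing operators
    (Lw : (w : W) → Uw w →L[ℂ] U) (Rw : (w : W) → U →L[ℂ] Uw w)
    -- gluing hypothesis (1)
    (h1a : ∀ w, P₀ ∘L Lw w = Lw w ∘L Pw0 w) (h1b : ∀ w, Rw w ∘L P₀ = Pw0 w ∘L Rw w)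
    (h1c : ∀ w, P₁ ∘L Lw w = Lw w ∘L Pw1 w) (h1d : ∀ w, Rw w ∘L P₁ = Pw1 w ∘L Rw w)
    -- gluing hypothesis (2)
    (h2a : ∀ w, Rw w ∘L P₁ ∘L Lw w = Pw1 w)
    (h2b : ∀ w w', w' ≠ w → Rw w' ∘L P₁ ∘L Lw w = 0)
    -- gluing hypothesis (3)
    (h3a : ∑ w, Lw w ∘L Pw0 w ∘L Rw w = P₀)
    (h3b : ∑ w, Lw w ∘L Pw1 w ∘L Rw w = P₁)
    -- the operators M^w and the point z
    (Mw : (w : W) → Uw w →L[ℂ] Uw w) (z : ℂ)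
    -- for each w, Q^w − z = P^w₁ M^w P^w₁ − z is invertible on U^w₁, with inverse B^w
    (Bw : (w : W) → Uw w →L[ℂ] Uw w)
    (hBw1 : ∀ w, (Pw1 w ∘L Mw w ∘L Pw1 w - z • Pw1 w) ∘L Bw w = Pw1 w)
    (hBw2 : ∀ w, Bw w ∘L (Pw1 w ∘L Mw w ∘L Pw1 w - z • Pw1 w) = Pw1 w)
    (hBw3 : ∀ w, Pw1 w ∘L Bw w = Bw w) (hBw4 : ∀ w, Bw w ∘L Pw1 w = Bw w)
    -- the glued operator M and the candidate inverse T
    (M T : U →L[ℂ] U)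
    (hM : M = ∑ w, Lw w ∘L Mw w ∘L Rw w)
    (hT : T = ∑ w, Lw w ∘L Pw1 w ∘L Bw w ∘L Pw1 w ∘L Rw w) :
    (P₁ ∘L M ∘L P₁ - z • P₁) ∘L T = P₁ ∧
    T ∘L (P₁ ∘L M ∘L P₁ - z • P₁) = P₁ ∧
    P₁ ∘L T = T ∧ T ∘L P₁ = T := by
  subst hM hT
  -- pointwise versions of the hypotheses
  have p1c : ∀ w t, P₁ (Lw w t) = Lw w (Pw1 w t) := fun w t => by
    have := DFunLike.congr_fun (h1c w) t; simpa only [comp_apply] using this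
  have p1d : ∀ w v, Rw w (P₁ v) = Pw1 w (Rw w v) := fun w v => by
    have := DFunLike.congr_fun (h1d w) v; simpa only [comp_apply] using this
  have p2a : ∀ w t, Rw w (P₁ (Lw w t)) = Pw1 w t := fun w t => by
    have := DFunLike.congr_fun (h2a w) t; simpa only [comp_apply] using this
  have p2b : ∀ w w', w' ≠ w → ∀ t, Rw w' (P₁ (Lw w t)) = 0 := fun w w' hne t => by
    have := DFunLike.congr_fun (h2b w w' hne) t
    simpa only [comp_apply, zero_apply] using this
  have pB3 : ∀ w x, Pw1 w (Bw w x) = Bw w x := fun w x => by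
    have := DFunLike.congr_fun (hBw3 w) x; simpa only [comp_apply] using this
  have pB4 : ∀ w x, Bw w (Pw1 w x) = Bw w x := fun w x => by
    have := DFunLike.congr_fun (hBw4 w) x; simpa only [comp_apply] using this
  have pA1 : ∀ w x, (Pw1 w ∘L Mw w ∘L Pw1 w - z • Pw1 w) (Bw w x) = Pw1 w x := fun w x => by
    have := DFunLike.congr_fun (hBw1 w) x; simpa only [comp_apply] using this
  have pA2 : ∀ w x, Bw w ((Pw1 w ∘L Mw w ∘L Pw1 w - z • Pw1 w) x) = Pw1 w x := fun w x => by
    have := DFunLike.congr_fun (hBw2 w) x; simpa only [comp_apply] using this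
  have pXA : ∀ w x, Pw1 w ((Mw w ∘L Pw1 w - z • (1 : Uw w →L[ℂ] Uw w)) x)
      = (Pw1 w ∘L Mw w ∘L Pw1 w - z • Pw1 w) x := fun w x => by
    simp only [sub_apply, smul_apply, one_apply_eq_self, comp_apply, map_sub, map_smul]
  -- the key multiplication formula for glued sums
  have key : ∀ (Y X : (w : W) → Uw w →L[ℂ] Uw w),
      (∑ w, Lw w ∘L Y w ∘L Rw w) ∘L (∑ w, Lw w ∘L Pw1 w ∘L X w ∘L Rw w)
        = ∑ w, Lw w ∘L Y w ∘L Pw1 w ∘L X w ∘L Rw w := by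
    intro Y X
    rw [finset_sum_comp]
    simp only [comp_finset_sum]
    rw [Finset.sum_comm]
    refine Finset.sum_congr rfl fun w _ => ?_
    refine Finset.sum_eq_single_of_mem w (Finset.mem_univ w) (fun w' _ hne => ?_) |>.trans ?_
    · ext v
      simp only [comp_apply, zero_apply]
      rw [← p1c w, p2b w w' hne, map_zero, map_zero]
    · ext v
      simp only [comp_apply]
      rw [← p1c w, p2a w]
  -- the glued form of Q − z
  have hQ1 : P₁ ∘L (∑ w, Lw w ∘L Mw w ∘L Rw w) ∘L P₁ - z • P₁
      = ∑ w, Lw w ∘L (Pw1 w ∘L Mw w ∘L Pw1 w - z • Pw1 w) ∘L Rw w := by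
    have hsmul : z • P₁ = ∑ w, z • (Lw w ∘L Pw1 w ∘L Rw w) := by
      rw [← Finset.smul_sum, h3b]
    rw [hsmul, finset_sum_comp]
    simp only [comp_finset_sum]
    rw [← Finset.sum_sub_distrib]
    refine Finset.sum_congr rfl fun w _ => ?_
    ext v
    simp only [comp_apply, sub_apply, smul_apply, map_sub, map_smul]
    rw [p1d w, p1c w]
  have hQ2 : P₁ ∘L (∑ w, Lw w ∘L Mw w ∘L Rw w) ∘L P₁ - z • P₁
      = ∑ w, Lw w ∘L Pw1 w ∘L (Mw w ∘L Pw1 w - z • (1 : Uw w →L[ℂ] Uw w)) ∘L Rw w := by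
    rw [hQ1]
    refine Finset.sum_congr rfl fun w _ => ?_
    ext v
    simp only [comp_apply, sub_apply, smul_apply, one_apply_eq_self, map_sub, map_smul]
  refine ⟨?_, ?_, ?_, ?_⟩
  · -- (Q − z) ∘ T = P₁
    calc (P₁ ∘L (∑ w, Lw w ∘L Mw w ∘L Rw w) ∘L P₁ - z • P₁)
          ∘L (∑ w, Lw w ∘L Pw1 w ∘L Bw w ∘L Pw1 w ∘L Rw w)
        = (∑ w, Lw w ∘L (Pw1 w ∘L Mw w ∘L Pw1 w - z • Pw1 w) ∘L Rw w)
            ∘L (∑ w, Lw w ∘L Pw1 w ∘L (Bw w ∘L Pw1 w) ∘L Rw w) := by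
          rw [hQ1]; rfl
      _ = ∑ w, Lw w ∘L (Pw1 w ∘L Mw w ∘L Pw1 w - z • Pw1 w)
            ∘L Pw1 w ∘L (Bw w ∘L Pw1 w) ∘L Rw w := key _ _
      _ = ∑ w, Lw w ∘L Pw1 w ∘L Rw w := by
          refine Finset.sum_congr rfl fun w _ => ?_
          ext v
          simp only [comp_apply]
          rw [pB4 w, pB3 w, pA1 w]
      _ = P₁ := h3b
  · -- T ∘ (Q − z) = P₁
    calc (∑ w, Lw w ∘L Pw1 w ∘L Bw w ∘L Pw1 w ∘L Rw w)
          ∘L (P₁ ∘L (∑ w, Lw w ∘L Mw w ∘L Rw w) ∘L P₁ - z • P₁)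
        = (∑ w, Lw w ∘L (Pw1 w ∘L Bw w ∘L Pw1 w) ∘L Rw w)
            ∘L (∑ w, Lw w ∘L Pw1 w ∘L (Mw w ∘L Pw1 w - z • (1 : Uw w →L[ℂ] Uw w)) ∘L Rw w) := by
          rw [hQ2]; rfl
      _ = ∑ w, Lw w ∘L (Pw1 w ∘L Bw w ∘L Pw1 w)
            ∘L Pw1 w ∘L (Mw w ∘L Pw1 w - z • (1 : Uw w →L[ℂ] Uw w)) ∘L Rw w := key _ _
      _ = ∑ w, Lw w ∘L Pw1 w ∘L Rw w := by
          refine Finset.sum_congr rfl fun w _ => ?_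
          ext v
          simp only [comp_apply]
          rw [pB3 w, pB4 w, pXA w, pA2 w]
      _ = P₁ := h3b
  · -- P₁ ∘ T = T
    rw [comp_finset_sum]
    refine Finset.sum_congr rfl fun w _ => ?_
    ext v
    simp only [comp_apply, p1c, pB3]
  · -- T ∘ P₁ = T
    rw [finset_sum_comp]
    refine Finset.sum_congr rfl fun w _ => ?_
    ext v
    simp only [comp_apply, p1d, pB4]
end

section
/- Under the gluing hypotheses (1)–(3), suppose also that for each w ∈ W there is a bounded operator M^w on U^w and a bounded operator M^w₀ on U^w₀, and that z ∈ ℂ and complex numbers φ₀, φ₁ are such that for every w: Q^w − z is invertible on U^w₁ and P^w₀M^wP^w₀ − z·P^w₀ − P^w₀M^wP^w₁(Q^w − z)⁻¹P^w₁M^wP^w₀ = φ₀·M^w₀ − φ₁·P^w₀ (as operators on U^w, with M^w₀ regarded as an operator on U^w₀ extended by zero). Then, setting M = Σ_w L^w M^w R^w and M₀ = Σ_w L^w M^w₀ R^w, the glued operators satisfy the same Schur-complement identity: P₀MP₀ − z·P₀ − P₀MP₁(Q − z)⁻¹P₁MP₀ = φ₀·M₀ − φ₁·P₀, where Q = P₁MP₁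 restricted to U₁ (which is invertible after subtracting z). -/
open ContinuousLinearMap

/-- Gluing lemma for spectral similarity (Schur-complement form): if each `M^w` satisfies
the Schur-complement identity
`P^w₀M^wP^w₀ − z·P^w₀ − P^w₀M^wP^w₁(Q^w − z)⁻¹P^w₁M^wP^w₀ = φ₀·M^w₀ − φ₁·P^w₀`
on `U^w` (with `M^w₀` an operator supported on `U^w₀` and `(Q^w − z)⁻¹` encoded by `B^w`),
then the glued operators `M = Σ L^w M^w R^w` and `M₀ = Σ L^w M^w₀ R^w` satisfy the same
identity: `P₀MP₀ − z·P₀ − P₀MP₁(Q − z)⁻¹P₁MP₀ = φ₀·M₀ − φ₁·P₀`, where `(Q − z)⁻¹` is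
(the extension by zero of) any inverse `T` of `Q − z = P₁MP₁ − z` on `U₁`. -/
theorem stmt3
    {U : Type*} [NormedAddCommGroup U] [InnerProductSpace ℂ U] [CompleteSpace U]
    {W : Type*} [Fintype W]
    -- orthogonal decomposition U = U₀ ⊕ U₁ via orthogonal projections P₀, P₁
    (P₀ P₁ : U →L[ℂ] U)
    (hP₀sa : IsSelfAdjoint P₀) (hP₀idem : P₀ ∘L P₀ = P₀) (hPsum : P₀ + P₁ = 1)
    -- the closed subspaces U^w, invariant under P₀ and P₁
    (Uw : W → Submodule ℂ U) (hUwc : ∀ w, IsClosed (Uw w : Set U))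
    (hUw0 : ∀ w, ∀ x ∈ Uw w, P₀ x ∈ Uw w) (hUw1 : ∀ w, ∀ x ∈ Uw w, P₁ x ∈ Uw w)
    -- the projections P^w₀, P^w₁ of U^w onto U^w₀, U^w₁ (the restrictions of P₀, P₁)
    (Pw0 Pw1 : (w : W) → Uw w →L[ℂ] Uw w)
    (hPw0 : ∀ w, (Uw w).subtypeL ∘L Pw0 w = P₀ ∘L (Uw w).subtypeL)
    (hPw1 : ∀ w, (Uw w).subtypeL ∘L Pw1 w = P₁ ∘L (Uw w).subtypeL)
    -- the gluing operators
    (Lw : (w : W) → Uw w →L[ℂ] U) (Rw : (w : W) → U →L[ℂ] Uw w)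
    -- gluing hypothesis (1)
    (h1a : ∀ w, P₀ ∘L Lw w = Lw w ∘L Pw0 w) (h1b : ∀ w, Rw w ∘L P₀ = Pw0 w ∘L Rw w)
    (h1c : ∀ w, P₁ ∘L Lw w = Lw w ∘L Pw1 w) (h1d : ∀ w, Rw w ∘L P₁ = Pw1 w ∘L Rw w)
    -- gluing hypothesis (2)
    (h2a : ∀ w, Rw w ∘L P₁ ∘L Lw w = Pw1 w)
    (h2b : ∀ w w', w' ≠ w → Rw w' ∘L P₁ ∘L Lw w = 0)
    -- gluing hypothesis (3)
    (h3a : ∑ w, Lw w ∘L Pw0 w ∘L Rw w = P₀)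
    (h3b : ∑ w, Lw w ∘L Pw1 w ∘L Rw w = P₁)
    -- the operators M^w, M^w₀, the point z and the constants φ₀, φ₁
    (Mw : (w : W) → Uw w →L[ℂ] Uw w)
    (Mw0 : (w : W) → Uw w →L[ℂ] Uw w)
    (hMw0 : ∀ w, Pw0 w ∘L Mw0 w ∘L Pw0 w = Mw0 w)
    (z φ₀ φ₁ : ℂ)
    -- for each w, Q^w − z = P^w₁ M^w P^w₁ − z is invertible on U^w₁, with inverse B^w
    (Bw : (w : W) → Uw w →L[ℂ] Uw w)
    (hBw1 : ∀ w, (Pw1 w ∘L Mw w ∘L Pw1 w - z • Pw1 w) ∘L Bw w = Pw1 w)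
    (hBw2 : ∀ w, Bw w ∘L (Pw1 w ∘L Mw w ∘L Pw1 w - z • Pw1 w) = Pw1 w)
    (hBw3 : ∀ w, Pw1 w ∘L Bw w = Bw w) (hBw4 : ∀ w, Bw w ∘L Pw1 w = Bw w)
    -- the Schur-complement identity for each M^w
    (hSchur : ∀ w,
      Pw0 w ∘L Mw w ∘L Pw0 w - z • Pw0 w -
          Pw0 w ∘L Mw w ∘L Pw1 w ∘L Bw w ∘L Pw1 w ∘L Mw w ∘L Pw0 w =
        φ₀ • Mw0 w - φ₁ • Pw0 w)
    -- the glued operators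
    (M M₀ : U →L[ℂ] U)
    (hM : M = ∑ w, Lw w ∘L Mw w ∘L Rw w)
    (hM₀ : M₀ = ∑ w, Lw w ∘L Mw0 w ∘L Rw w) :
    ∀ T : U →L[ℂ] U,
      (P₁ ∘L M ∘L P₁ - z • P₁) ∘L T = P₁ →
      T ∘L (P₁ ∘L M ∘L P₁ - z • P₁) = P₁ →
      P₁ ∘L T = T → T ∘L P₁ = T →
      P₀ ∘L M ∘L P₀ - z • P₀ - P₀ ∘L M ∘L P₁ ∘L T ∘L P₁ ∘L M ∘L P₀ =
        φ₀ • M₀ - φ₁ • P₀ := by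
  intro T hT1 hT2 hT3 hT4
  classical
  -- pointwise versions of the intertwining hypotheses
  have hLc : ∀ w (v : Uw w), P₁ (Lw w v) = Lw w (Pw1 w v) := fun w v => by
    have := ContinuousLinearMap.ext_iff.mp (h1c w) v
    simpa using this
  have hRc : ∀ w (u : U), Rw w (P₁ u) = Pw1 w (Rw w u) := fun w u => by
    have := ContinuousLinearMap.ext_iff.mp (h1d w) u
    simpa using this
  have hLa : ∀ w (v : Uw w), P₀ (Lw w v) = Lw w (Pw0 w v) := fun w v => by
    have := ContinuousLinearMap.ext_iff.mp (h1a w) v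
    simpa using this
  have hRb : ∀ w (u : U), Rw w (P₀ u) = Pw0 w (Rw w u) := fun w u => by
    have := ContinuousLinearMap.ext_iff.mp (h1b w) u
    simpa using this
  -- P₁ is idempotent
  have hP₁idem : P₁ ∘L P₁ = P₁ := by
    have h : P₁ = 1 - P₀ := eq_sub_of_add_eq' hPsum
    rw [h]
    ext x
    have h0 := ContinuousLinearMap.ext_iff.mp hP₀idem x
    simp only [ContinuousLinearMap.comp_apply] at h0
    simp only [ContinuousLinearMap.comp_apply, ContinuousLinearMap.sub_apply,
      ContinuousLinearMap.one_apply, map_sub, h0]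
    abel
  -- Pw1 is idempotent
  have hPw1idem : ∀ w, Pw1 w ∘L Pw1 w = Pw1 w := by
    intro w
    have h : (Uw w).subtypeL ∘L (Pw1 w ∘L Pw1 w) = (Uw w).subtypeL ∘L Pw1 w := by
      calc (Uw w).subtypeL ∘L (Pw1 w ∘L Pw1 w)
          = ((Uw w).subtypeL ∘L Pw1 w) ∘L Pw1 w := (ContinuousLinearMap.comp_assoc _ _ _).symm
        _ = (P₁ ∘L (Uw w).subtypeL) ∘L Pw1 w := by rw [hPw1]
        _ = P₁ ∘L ((Uw w).subtypeL ∘L Pw1 w) := ContinuousLinearMap.comp_assoc _ _ _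
        _ = P₁ ∘L (P₁ ∘L (Uw w).subtypeL) := by rw [hPw1]
        _ = (P₁ ∘L P₁) ∘L (Uw w).subtypeL := (ContinuousLinearMap.comp_assoc _ _ _).symm
        _ = P₁ ∘L (Uw w).subtypeL := by rw [hP₁idem]
        _ = (Uw w).subtypeL ∘L Pw1 w := (hPw1 w).symm
    ext x
    have h2 := ContinuousLinearMap.ext_iff.mp h x
    simp only [ContinuousLinearMap.comp_apply, Submodule.subtypeL_apply] at h2 ⊢
    exact h2
  have hPw1i : ∀ w (x : Uw w), Pw1 w (Pw1 w x) = Pw1 w x := fun w x => by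
    have := ContinuousLinearMap.ext_iff.mp (hPw1idem w) x
    simpa using this
  -- the key multiplication rule for glued operators
  have Gmul : ∀ A B : (w : W) → Uw w →L[ℂ] Uw w, (∀ w, Pw1 w ∘L B w = B w) →
      (∑ w, Lw w ∘L A w ∘L Rw w) ∘L (∑ w, Lw w ∘L B w ∘L Rw w)
        = ∑ w, Lw w ∘L (A w ∘L B w) ∘L Rw w := by
    intro A B hB
    have hBpt : ∀ w (y : Uw w), Pw1 w (B w y) = B w y := fun w y => by
      have := ContinuousLinearMap.ext_iff.mp (hB w) y
      simpa using this
    have key_ne : ∀ w w', w' ≠ w → ∀ y : U, Rw w (Lw w' (B w' (Rw w' y))) = 0 := by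
      intro w w' hne y
      have e1 : Lw w' (B w' (Rw w' y)) = P₁ (Lw w' (B w' (Rw w' y))) := by
        rw [hLc, hBpt]
      rw [e1]
      have := ContinuousLinearMap.ext_iff.mp (h2b w' w (Ne.symm hne)) (B w' (Rw w' y))
      simp only [ContinuousLinearMap.comp_apply, ContinuousLinearMap.zero_apply] at this
      exact this
    have key_eq : ∀ w (y : U), Rw w (Lw w (B w (Rw w y))) = B w (Rw w y) := by
      intro w y
      have e1 : Lw w (B w (Rw w y)) = P₁ (Lw w (B w (Rw w y))) := by
        rw [hLc, hBpt]
      rw [e1]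
      have := ContinuousLinearMap.ext_iff.mp (h2a w) (B w (Rw w y))
      simp only [ContinuousLinearMap.comp_apply] at this
      rw [this, hBpt]
    ext x
    simp only [ContinuousLinearMap.comp_apply, ContinuousLinearMap.sum_apply, map_sum]
    refine Finset.sum_congr rfl fun w _ => ?_
    rw [Finset.sum_eq_single w
      (fun w' _ hw' => by rw [key_ne w' w (Ne.symm hw'), map_zero, map_zero])
      (fun h => absurd (Finset.mem_univ w) h), key_eq]
  -- multiplying a glued operator by P₀, P₁ on either side
  have GP1left : ∀ A : (w : W) → Uw w →L[ℂ] Uw w,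
      P₁ ∘L (∑ w, Lw w ∘L A w ∘L Rw w) = ∑ w, Lw w ∘L (Pw1 w ∘L A w) ∘L Rw w := by
    intro A
    ext x
    simp only [ContinuousLinearMap.comp_apply, ContinuousLinearMap.sum_apply, map_sum, hLc]
  have GP1right : ∀ A : (w : W) → Uw w →L[ℂ] Uw w,
      (∑ w, Lw w ∘L A w ∘L Rw w) ∘L P₁ = ∑ w, Lw w ∘L (A w ∘L Pw1 w) ∘L Rw w := by
    intro A
    ext x
    simp only [ContinuousLinearMap.comp_apply, ContinuousLinearMap.sum_apply, hRc]
  have GP0left : ∀ A : (w : W) → Uw w →L[ℂ] Uw w,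
      P₀ ∘L (∑ w, Lw w ∘L A w ∘L Rw w) = ∑ w, Lw w ∘L (Pw0 w ∘L A w) ∘L Rw w := by
    intro A
    ext x
    simp only [ContinuousLinearMap.comp_apply, ContinuousLinearMap.sum_apply, map_sum, hLa]
  have GP0right : ∀ A : (w : W) → Uw w →L[ℂ] Uw w,
      (∑ w, Lw w ∘L A w ∘L Rw w) ∘L P₀ = ∑ w, Lw w ∘L (A w ∘L Pw0 w) ∘L Rw w := by
    intro A
    ext x
    simp only [ContinuousLinearMap.comp_apply, ContinuousLinearMap.sum_apply, hRb]
  -- scalars and subtraction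
  have Gsmul : ∀ (c : ℂ) (A : (w : W) → Uw w →L[ℂ] Uw w),
      c • (∑ w, Lw w ∘L A w ∘L Rw w) = ∑ w, Lw w ∘L (c • A w) ∘L Rw w := by
    intro c A
    rw [Finset.smul_sum]
    refine Finset.sum_congr rfl fun w _ => ?_
    rw [ContinuousLinearMap.smul_comp, ContinuousLinearMap.comp_smul]
  have Gsub : ∀ A B : (w : W) → Uw w →L[ℂ] Uw w,
      (∑ w, Lw w ∘L A w ∘L Rw w) - (∑ w, Lw w ∘L B w ∘L Rw w)
        = ∑ w, Lw w ∘L (A w - B w) ∘L Rw w := by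
    intro A B
    rw [← Finset.sum_sub_distrib]
    refine Finset.sum_congr rfl fun w _ => ?_
    rw [ContinuousLinearMap.sub_comp, ContinuousLinearMap.comp_sub]
  -- Q - z as a glued operator
  have hQ : P₁ ∘L M ∘L P₁ - z • P₁
      = ∑ w, Lw w ∘L (Pw1 w ∘L Mw w ∘L Pw1 w - z • Pw1 w) ∘L Rw w := by
    rw [hM, GP1right, GP1left, ← h3b, Gsmul, Gsub]
  -- T equals the glued inverse B
  have hQB : (P₁ ∘L M ∘L P₁ - z • P₁) ∘L (∑ w, Lw w ∘L Bw w ∘L Rw w) = P₁ := by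
    rw [hQ, Gmul (fun w => Pw1 w ∘L Mw w ∘L Pw1 w - z • Pw1 w) Bw hBw3]
    simp only [hBw1, h3b]
  have hTB : T = ∑ w, Lw w ∘L Bw w ∘L Rw w := by
    have h5 : P₁ ∘L (∑ w, Lw w ∘L Bw w ∘L Rw w) = ∑ w, Lw w ∘L Bw w ∘L Rw w := by
      rw [GP1left]
      simp only [hBw3]
    calc T = T ∘L P₁ := hT4.symm
      _ = T ∘L ((P₁ ∘L M ∘L P₁ - z • P₁) ∘L (∑ w, Lw w ∘L Bw w ∘L Rw w)) := by rw [hQB]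
      _ = (T ∘L (P₁ ∘L M ∘L P₁ - z • P₁)) ∘L (∑ w, Lw w ∘L Bw w ∘L Rw w) :=
          (ContinuousLinearMap.comp_assoc _ _ _).symm
      _ = P₁ ∘L (∑ w, Lw w ∘L Bw w ∘L Rw w) := by rw [hT2]
      _ = ∑ w, Lw w ∘L Bw w ∘L Rw w := h5
  -- the pieces of the left-hand side
  have hD1 : ∀ w, Pw1 w ∘L (Pw1 w ∘L Mw w ∘L Pw0 w) = Pw1 w ∘L Mw w ∘L Pw0 w := by
    intro w
    ext x
    simp only [ContinuousLinearMap.comp_apply, hPw1i]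
  have hBD1 : ∀ w, Pw1 w ∘L (Bw w ∘L (Pw1 w ∘L Mw w ∘L Pw0 w))
      = Bw w ∘L (Pw1 w ∘L Mw w ∘L Pw0 w) := by
    intro w
    rw [← ContinuousLinearMap.comp_assoc, hBw3]
  have hY : P₁ ∘L M ∘L P₀ = ∑ w, Lw w ∘L (Pw1 w ∘L Mw w ∘L Pw0 w) ∘L Rw w := by
    rw [hM, GP0right, GP1left]
  have hcross : P₀ ∘L M ∘L P₁ ∘L T ∘L P₁ ∘L M ∘L P₀
      = ∑ w, Lw w ∘L (Pw0 w ∘L (Mw w ∘L (Bw w ∘L (Pw1 w ∘L Mw w ∘L Pw0 w)))) ∘L Rw w := by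
    rw [← ContinuousLinearMap.comp_assoc P₁ T, hT3, hY, hTB,
      Gmul Bw (fun w => Pw1 w ∘L Mw w ∘L Pw0 w) hD1, hM,
      Gmul Mw (fun w => Bw w ∘L (Pw1 w ∘L Mw w ∘L Pw0 w)) hBD1, GP0left]
  have hA1 : P₀ ∘L M ∘L P₀ = ∑ w, Lw w ∘L (Pw0 w ∘L (Mw w ∘L Pw0 w)) ∘L Rw w := by
    rw [hM, GP0right, GP0left]
  have hzP0 : z • P₀ = ∑ w, Lw w ∘L (z • Pw0 w) ∘L Rw w := by
    rw [← h3a, Gsmul]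
  rw [hA1, hzP0, hcross, Gsub, Gsub]
  have hfin : ∀ w, (Pw0 w ∘L (Mw w ∘L Pw0 w) - z • Pw0 w
      - Pw0 w ∘L (Mw w ∘L (Bw w ∘L (Pw1 w ∘L Mw w ∘L Pw0 w)))) = φ₀ • Mw0 w - φ₁ • Pw0 w := by
    intro w
    have h := hSchur w
    have e : Pw0 w ∘L Mw w ∘L Pw1 w ∘L Bw w ∘L Pw1 w ∘L Mw w ∘L Pw0 w
        = Pw0 w ∘L (Mw w ∘L (Bw w ∘L (Pw1 w ∘L Mw w ∘L Pw0 w))) := by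
      rw [← ContinuousLinearMap.comp_assoc (Pw1 w) (Bw w), hBw3]
    rw [e] at h
    exact h
  calc (∑ w, Lw w ∘L (Pw0 w ∘L (Mw w ∘L Pw0 w) - z • Pw0 w
        - Pw0 w ∘L (Mw w ∘L (Bw w ∘L (Pw1 w ∘L Mw w ∘L Pw0 w)))) ∘L Rw w)
      = ∑ w, Lw w ∘L (φ₀ • Mw0 w - φ₁ • Pw0 w) ∘L Rw w :=
        Finset.sum_congr rfl fun w _ => by rw [hfin w]
    _ = φ₀ • M₀ - φ₁ • P₀ := by
        rw [hM₀, ← h3a, Gsmul, Gsmul, Gsub]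
end

section
/- Let (β_k)_{k≥1} be real numbers and (a^{(m)})_{m≥0} a compatible family of 1-forms on the diamond hierarchical graphs, with Dirichlet magnetic operators D_m. Then for every m ≥ 1 the eigenvalue 1 of D_m has multiplicity exactly (1/3)(4^m + 2), i.e., dim ker(D_m − I) = (4^m + 2)/3. -/
open Complex

abbrev DEdge (m : ℕ) : Type := Fin m → Fin 4

def DVtx : ℕ → Type
  | 0 => Bool
  | m + 1 => DVtx m ⊕ (DEdge m × Bool)

instance DVtx.instFintype : (m : ℕ) → Fintype (DVtx m)
  | 0 => inferInstanceAs (Fintype Bool)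
  | m + 1 =>
      letI := DVtx.instFintype m
      inferInstanceAs (Fintype (DVtx m ⊕ (DEdge m × Bool)))

instance DVtx.instDecidableEq : (m : ℕ) → DecidableEq (DVtx m)
  | 0 => inferInstanceAs (DecidableEq Bool)
  | m + 1 =>
      letI := DVtx.instDecidableEq m
      inferInstanceAs (DecidableEq (DVtx m ⊕ (DEdge m × Bool)))

/-- The inclusion of scale-`m` vertices into scale-`m+1` vertices. -/
def oldV {m : ℕ} (x : DVtx m) : DVtx (m + 1) := Sum.inl x

/-- The new vertices at scale `m+1`: each scale-`m` edge gives two new vertices. -/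
def newV {m : ℕ} (p : DEdge m × Bool) : DVtx (m + 1) := Sum.inr p

/-- Endpoints (source, target) of each canonically directed edge. Each edge `w` of `G_m`
with endpoints `x = src w`, `y = tgt w` is replaced in `G_{m+1}` by the 4-cycle
`x–u–y–v–x` with `u = (w,false)`, `v = (w,true)`, its four edges directed
`x→u`, `u→y`, `y→v`, `v→x`. -/
def dEnds : (m : ℕ) → DEdge m → DVtx m × DVtx m
  | 0, _ => (false, true)
  | m + 1, w =>
      let p : DEdge m := fun i => w i.castSucc
      let x := (dEnds m p).1
      let y := (dEnds m p).2
      if w (Fin.last m) = 0 then (oldV x, newV (p, false))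
      else if w (Fin.last m) = 1 then (newV (p, false), oldV y)
      else if w (Fin.last m) = 2 then (oldV y, newV (p, true))
      else (newV (p, true), oldV x)

def dsrc (m : ℕ) (e : DEdge m) : DVtx m := (dEnds m e).1
def dtgt (m : ℕ) (e : DEdge m) : DVtx m := (dEnds m e).2

/-- Degree of a vertex in `G_m`. -/
def ddeg (m : ℕ) (x : DVtx m) : ℕ :=
  (Finset.univ.filter fun e : DEdge m => dsrc m e = x).card +
  (Finset.univ.filter fun e : DEdge m => dtgt m e = x).card

/-- The magnetic operator `M^a_m` associated to a 1-form `a` (recorded on the canonical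
orientations of the edges; the reversed edge carries `-a e`). -/
noncomputable def magOp (m : ℕ) (a : DEdge m → ℝ) (f : DVtx m → ℂ) (x : DVtx m) : ℂ :=
  (ddeg m x : ℂ)⁻¹ *
    ((∑ e : DEdge m, if dsrc m e = x then f x - Complex.exp (Complex.I * a e) * f (dtgt m e) else 0) +
     (∑ e : DEdge m, if dtgt m e = x then f x - Complex.exp (-(Complex.I * a e)) * f (dsrc m e) else 0))

/-- The two original vertices `V_0` viewed inside `V_m`. -/
def base : (m : ℕ) → Bool → DVtx m
  | 0, b => b
  | m + 1, b => oldV (base m b)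

/-- Matrix of the magnetic operator `M^a_m`. -/
noncomputable def magMat (m : ℕ) (a : DEdge m → ℝ) : Matrix (DVtx m) (DVtx m) ℂ :=
  Matrix.of fun x y => magOp m a (fun v => if v = y then 1 else 0) x

/-- The Dirichlet magnetic operator: submatrix indexed by `V_m \ V_0`. -/
noncomputable def dirMat (m : ℕ) (a : DEdge m → ℝ) :
    Matrix {x : DVtx m // ∀ b, x ≠ base m b} {x : DVtx m // ∀ b, x ≠ base m b} ℂ :=
  (magMat m a).submatrix Subtype.val Subtype.val

/-- Flux of a 1-form around the scale-`(m+1)` cell replacing edge `w` of `G_m`. -/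
noncomputable def cellFlux {m : ℕ} (a : DEdge (m + 1) → ℝ) (w : DEdge m) : ℝ :=
  a (Fin.snoc w 0) + a (Fin.snoc w 1) + a (Fin.snoc w 2) + a (Fin.snoc w 3)

/-- The trace of a 1-form on `G_{m+1}` to `G_m`:
`a'(e_{xy}) = (1/2)(a(e_{xu}) + a(e_{uy}) + a(e_{xv}) + a(e_{vy}))`. -/
noncomputable def traceForm {m : ℕ} (a : DEdge (m + 1) → ℝ) : DEdge m → ℝ :=
  fun w => (1 / 2) * (a (Fin.snoc w 0) + a (Fin.snoc w 1) - a (Fin.snoc w 2) - a (Fin.snoc w 3))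

/-- A compatible family of 1-forms: flux `±4β_m` through every scale-`m` cell, and each
form traces to the previous one. -/
def Compatible (βs : ℕ → ℝ) (a : (m : ℕ) → DEdge m → ℝ) : Prop :=
  ∀ (k : ℕ) (w : DEdge k),
    (cellFlux (a (k + 1)) w = 4 * βs (k + 1) ∨ cellFlux (a (k + 1)) w = -(4 * βs (k + 1))) ∧
    traceForm (a (k + 1)) w = a k w


-- foundational lemmas
lemma dEnds_snoc (n : ℕ) (w : DEdge n) (j : Fin 4) :
    dEnds (n+1) (Fin.snoc w j) =
      if j = 0 then (oldV (dsrc n w), newV (w, false))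
      else if j = 1 then (newV (w, false), oldV (dtgt n w))
      else if j = 2 then (oldV (dtgt n w), newV (w, true))
      else (newV (w, true), oldV (dsrc n w)) := by
  have hp : (fun i : Fin n => (Fin.snoc w j : DEdge (n+1)) (Fin.castSucc i)) = w :=
    funext fun i => by simp
  simp only [dEnds, hp, Fin.snoc_last, dsrc, dtgt]

def edgeEquiv (n : ℕ) : DEdge n × Fin 4 ≃ DEdge (n+1) where
  toFun p := Fin.snoc p.1 p.2
  invFun e := (Fin.init e, e (Fin.last n))
  left_inv p := by simp [Fin.init_snoc, Fin.snoc_last]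
  right_inv e := by simp [Fin.snoc_init_self]

lemma sum_edges (n : ℕ) (F : DEdge (n+1) → ℂ) :
    ∑ e : DEdge (n+1), F e =
      ∑ w : DEdge n, (F (Fin.snoc w 0) + F (Fin.snoc w 1) + F (Fin.snoc w 2) + F (Fin.snoc w 3)) := by
  rw [← (edgeEquiv n).sum_comp F]
  rw [Fintype.sum_prod_type]
  refine Finset.sum_congr rfl fun w _ => ?_
  rw [Fin.sum_univ_four]
  ring_nf
  rfl

lemma conn (m : ℕ) (S : Set (DVtx m)) (hb : ∀ b, base m b ∈ S)
    (he : ∀ e : DEdge m, dsrc m e ∈ S ↔ dtgt m e ∈ S) : ∀ x, x ∈ S := by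
  induction m with
  | zero => intro x; cases x with
    | false => exact hb false
    | true => exact hb true
  | succ n ih =>
      have h0 : ∀ w : DEdge n, (oldV (dsrc n w) ∈ S) ↔ (newV (w, false) ∈ S) := by
        intro w
        have := he (Fin.snoc w 0); rwa [dsrc, dtgt, dEnds_snoc, if_pos rfl] at this
      have h1 : ∀ w : DEdge n, (newV (w, false) ∈ S) ↔ (oldV (dtgt n w) ∈ S) := by
        intro w
        have := he (Fin.snoc w 1); rwa [dsrc, dtgt, dEnds_snoc, if_neg (by decide), if_pos rfl] at this
      have h2 : ∀ w : DEdge n, (oldV (dtgt n w) ∈ S) ↔ (newV (w, true) ∈ S) := by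
        intro w
        have := he (Fin.snoc w 2); rwa [dsrc, dtgt, dEnds_snoc, if_neg (by decide), if_neg (by decide), if_pos rfl] at this
      have hold : ∀ z : DVtx n, oldV z ∈ S := by
        refine ih {z | oldV z ∈ S} (fun b => hb b) (fun w => ?_)
        exact (h0 w).trans (h1 w)
      rintro (z | ⟨w, b⟩)
      · exact hold z
      · cases b
        · exact (h0 w).mp (hold _)
        · exact (h2 w).mp (hold _)

lemma exists_edge (m : ℕ) (x : DVtx m) : ∃ e : DEdge m, dsrc m e = x ∨ dtgt m e = x := by
  induction m with
  | zero =>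
      cases x with
      | false => exact ⟨fun i => 0, Or.inl rfl⟩
      | true => exact ⟨fun i => 0, Or.inr rfl⟩
  | succ n ih =>
      rcases x with z | ⟨w, b⟩
      · obtain ⟨e, he⟩ := ih z
        rcases he with h | h
        · exact ⟨Fin.snoc e 0, Or.inl (by rw [dsrc, dEnds_snoc, if_pos rfl]; simp [oldV, h]; rfl)⟩
        · exact ⟨Fin.snoc e 2, Or.inl (by rw [dsrc, dEnds_snoc, if_neg (by decide), if_neg (by decide), if_pos rfl]; simp [oldV, h]; rfl)⟩
      · cases b
        · exact ⟨Fin.snoc w 0, Or.inr (by rw [dtgt, dEnds_snoc, if_pos rfl]; rfl)⟩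
        · exact ⟨Fin.snoc w 2, Or.inr (by rw [dtgt, dEnds_snoc, if_neg (by decide), if_neg (by decide), if_pos rfl]; rfl)⟩

lemma ddeg_pos (m : ℕ) (x : DVtx m) : 0 < ddeg m x := by
  obtain ⟨e, he⟩ := exists_edge m x
  rcases he with h | h
  · exact Nat.lt_of_lt_of_le (Finset.card_pos.mpr ⟨e, by simp [h]⟩) (Nat.le_add_right _ _)
  · exact Nat.lt_of_lt_of_le (Finset.card_pos.mpr ⟨e, by simp [h]⟩) (Nat.le_add_left _ _)

lemma base_injective (m : ℕ) : Function.Injective (base m) := by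
  induction m with
  | zero => intro b b' h; exact h
  | succ n ih => intro b b' h; exact ih (Sum.inl.inj h)

lemma card_DVtx (m : ℕ) : 3 * Fintype.card (DVtx m) = 2 * 4 ^ m + 4 := by
  induction m with
  | zero => rfl
  | succ n ih =>
      have h : Fintype.card (DVtx (n+1)) = Fintype.card (DVtx n) + Fintype.card (DEdge n × Bool) := by
        rw [show (DVtx.instFintype (n+1) : Fintype (DVtx (n+1))) =
          inferInstanceAs (Fintype (DVtx n ⊕ (DEdge n × Bool))) from rfl]
        exact Fintype.card_sum
      have h2 : Fintype.card (DEdge n × Bool) = 4 ^ n * 2 := by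
        simp [Fintype.card_prod, Fintype.card_fun]
      rw [h, h2, Nat.mul_add, ih]
      ring

lemma card_int (m : ℕ) :
    Fintype.card {x : DVtx m // ∀ b, x ≠ base m b} + 2 = Fintype.card (DVtx m) := by
  classical
  rw [Fintype.card_subtype]
  have hfilter : (Finset.univ.filter fun x : DVtx m => ∀ b, x ≠ base m b) =
      Finset.univ \ {base m false, base m true} := by
    ext x
    simp [Bool.forall_bool, and_comm]
  rw [hfilter, Finset.card_sdiff_of_subset (Finset.subset_univ _), Finset.card_univ]
  have hne : base m false ≠ base m true := fun h => by
    have := base_injective m h; simp at this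
  rw [Finset.card_pair hne]
  have : 2 ≤ Fintype.card (DVtx m) := by
    have := Fintype.card_le_of_injective (base m) (base_injective m)
    simpa using this
  omega

/-- The "adjacency sum" `∑_{y ~ x} e^{i a(e_{xy})} g(y)`. -/
noncomputable def adjSum (m : ℕ) (α : DEdge m → ℝ) (x : DVtx m) (g : DVtx m → ℂ) : ℂ :=
  ∑ e : DEdge m,
    ((if dsrc m e = x then Complex.exp (Complex.I * α e) * g (dtgt m e) else 0) +
     (if dtgt m e = x then Complex.exp (-(Complex.I * α e)) * g (dsrc m e) else 0))

lemma deg_sum (m : ℕ) (x : DVtx m) (c : ℂ) :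
    (∑ e : DEdge m, if dsrc m e = x then c else 0) +
      (∑ e : DEdge m, if dtgt m e = x then c else 0) = (ddeg m x : ℂ) * c := by
  rw [← Finset.sum_filter, ← Finset.sum_filter]
  simp only [Finset.sum_const, nsmul_eq_mul, ddeg]
  push_cast
  ring

lemma magOp_eq (m : ℕ) (α : DEdge m → ℝ) (g : DVtx m → ℂ) (x : DVtx m) :
    magOp m α g x = (ddeg m x : ℂ)⁻¹ * ((ddeg m x : ℂ) * g x - adjSum m α x g) := by
  rw [magOp, adjSum]
  congr 1
  rw [← deg_sum m x (g x)]
  rw [show (∑ e : DEdge m, if dsrc m e = x then g x - Complex.exp (Complex.I * ↑(α e)) * g (dtgt m e) else 0)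
      = ∑ e : DEdge m, ((if dsrc m e = x then g x else 0) - (if dsrc m e = x then Complex.exp (Complex.I * ↑(α e)) * g (dtgt m e) else 0)) from
    Finset.sum_congr rfl fun e _ => by split <;> simp]
  rw [show (∑ e : DEdge m, if dtgt m e = x then g x - Complex.exp (-(Complex.I * ↑(α e))) * g (dsrc m e) else 0)
      = ∑ e : DEdge m, ((if dtgt m e = x then g x else 0) - (if dtgt m e = x then Complex.exp (-(Complex.I * ↑(α e))) * g (dsrc m e) else 0)) from
    Finset.sum_congr rfl fun e _ => by split <;> simp]
  rw [Finset.sum_sub_distrib, Finset.sum_sub_distrib, Finset.sum_add_distrib]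
  ring

lemma adjSum_delta (m : ℕ) (α : DEdge m → ℝ) (x : DVtx m) (g : DVtx m → ℂ) :
    ∑ z : DVtx m, adjSum m α x (fun v => if v = z then 1 else 0) * g z = adjSum m α x g := by
  simp only [adjSum, Finset.sum_mul]
  rw [Finset.sum_comm]
  refine Finset.sum_congr rfl fun e _ => ?_
  simp only [add_mul]
  rw [Finset.sum_add_distrib]
  congr 1
  · rw [show (∑ z : DVtx m, (if dsrc m e = x then Complex.exp (Complex.I * ↑(α e)) * (if dtgt m e = z then 1 else 0) else 0) * g z)
        = ∑ z : DVtx m, (if dtgt m e = z then (if dsrc m e = x then Complex.exp (Complex.I * ↑(α e)) * g z else 0) else 0) from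
      Finset.sum_congr rfl fun z _ => by
        by_cases h1 : dsrc m e = x <;> by_cases h2 : dtgt m e = z <;>
          simp [h1, h2, eq_comm]]
    rw [Finset.sum_ite_eq Finset.univ (dtgt m e)
      (fun z => if dsrc m e = x then Complex.exp (Complex.I * ↑(α e)) * g z else 0)]
    simp
  · rw [show (∑ z : DVtx m, (if dtgt m e = x then Complex.exp (-(Complex.I * ↑(α e))) * (if dsrc m e = z then 1 else 0) else 0) * g z)
        = ∑ z : DVtx m, (if dsrc m e = z then (if dtgt m e = x then Complex.exp (-(Complex.I * ↑(α e))) * g z else 0) else 0) from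
      Finset.sum_congr rfl fun z _ => by
        by_cases h1 : dtgt m e = x <;> by_cases h2 : dsrc m e = z <;>
          simp [h1, h2, eq_comm]]
    rw [Finset.sum_ite_eq Finset.univ (dsrc m e)
      (fun z => if dtgt m e = x then Complex.exp (-(Complex.I * ↑(α e))) * g z else 0)]
    simp

/-- Summing a matrix row of `magMat` against a vector computes `magOp`. -/
lemma sum_magMat (m : ℕ) (α : DEdge m → ℝ) (g : DVtx m → ℂ) (x : DVtx m) :
    ∑ z : DVtx m, magMat m α x z * g z = magOp m α g x := by
  simp only [magMat, Matrix.of_apply, magOp_eq]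
  rw [show (∑ z : DVtx m, (ddeg m x : ℂ)⁻¹ *
        ((ddeg m x : ℂ) * (if x = z then 1 else 0) - adjSum m α x fun v => if v = z then 1 else 0) * g z)
      = (ddeg m x : ℂ)⁻¹ * ∑ z : DVtx m,
        ((ddeg m x : ℂ) * (if x = z then 1 else 0) - adjSum m α x fun v => if v = z then 1 else 0) * g z from by
    rw [Finset.mul_sum]; exact Finset.sum_congr rfl fun z _ => by ring]
  congr 1
  rw [show (∑ z : DVtx m,
        ((ddeg m x : ℂ) * (if x = z then 1 else 0) - adjSum m α x fun v => if v = z then 1 else 0) * g z)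
      = (∑ z : DVtx m, (ddeg m x : ℂ) * (if x = z then 1 else 0) * g z) -
        (∑ z : DVtx m, adjSum m α x (fun v => if v = z then 1 else 0) * g z) from by
    rw [← Finset.sum_sub_distrib]; exact Finset.sum_congr rfl fun z _ => by ring]
  rw [adjSum_delta]
  congr 1
  rw [show (∑ z : DVtx m, (ddeg m x : ℂ) * (if x = z then 1 else 0) * g z)
      = ∑ z : DVtx m, (if z = x then (ddeg m x : ℂ) * g z else 0) from
    Finset.sum_congr rfl fun z _ => by by_cases h : x = z <;> simp [h, eq_comm]]
  rw [Finset.sum_ite_eq' Finset.univ x (fun z => (ddeg m x : ℂ) * g z)]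
  simp

/-- Extension of a function on interior vertices by zero. -/
noncomputable def extI (m : ℕ) (f : {x : DVtx m // ∀ b, x ≠ base m b} → ℂ) : DVtx m → ℂ :=
  fun z => if h : ∀ b, z ≠ base m b then f ⟨z, h⟩ else 0

lemma extI_interior (m : ℕ) (f : {x : DVtx m // ∀ b, x ≠ base m b} → ℂ)
    (x : {x : DVtx m // ∀ b, x ≠ base m b}) : extI m f x.val = f x := by
  rw [extI, dif_pos x.2]

lemma extI_base (m : ℕ) (f : {x : DVtx m // ∀ b, x ≠ base m b} → ℂ) (b : Bool) :
    extI m f (base m b) = 0 := by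
  rw [extI, dif_neg (fun h => h b rfl)]

lemma sum_extI (m : ℕ) (f : {x : DVtx m // ∀ b, x ≠ base m b} → ℂ) (F : DVtx m → ℂ) :
    ∑ x : {x : DVtx m // ∀ b, x ≠ base m b}, F x.val * f x = ∑ z : DVtx m, F z * extI m f z := by
  classical
  rw [← Finset.sum_filter_add_sum_filter_not Finset.univ (fun z => ∀ b, z ≠ base m b)
    (fun z => F z * extI m f z)]
  have h2 : (∑ z ∈ Finset.univ.filter (fun z => ¬ ∀ b, z ≠ base m b), F z * extI m f z) = 0 := by
    refine Finset.sum_eq_zero fun z hz => ?_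
    rw [Finset.mem_filter] at hz
    rw [extI, dif_neg hz.2, mul_zero]
  rw [h2, add_zero]
  rw [Finset.sum_subtype (p := fun z => ∀ b, z ≠ base m b)
    (Finset.univ.filter (fun z => ∀ b, z ≠ base m b))
    (by intro z; simp) (fun z => F z * extI m f z)]
  exact Finset.sum_congr rfl fun x _ => by rw [extI_interior]

/-- Kernel characterization: `f ∈ ker (D_m - 1)` iff all adjacency sums of its
zero-extension vanish at interior vertices. -/
lemma mem_ker_iff (m : ℕ) (α : DEdge m → ℝ) (f : {x : DVtx m // ∀ b, x ≠ base m b} → ℂ) :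
    f ∈ LinearMap.ker (Matrix.toLin' (dirMat m α - (1 : ℂ) • 1)) ↔
      ∀ x : {x : DVtx m // ∀ b, x ≠ base m b}, adjSum m α x.val (extI m f) = 0 := by
  rw [LinearMap.mem_ker]
  have hmv : ∀ x : {x : DVtx m // ∀ b, x ≠ base m b},
      Matrix.toLin' (dirMat m α - (1 : ℂ) • 1) f x
        = -(ddeg m x.val : ℂ)⁻¹ * adjSum m α x.val (extI m f) := by
    intro x
    rw [Matrix.toLin'_apply, Matrix.mulVec, dotProduct]
    simp only [Matrix.sub_apply, Matrix.smul_apply, Matrix.one_apply, smul_eq_mul, one_mul]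
    rw [show (∑ y : {x : DVtx m // ∀ b, x ≠ base m b},
          (dirMat m α x y - (if x = y then 1 else 0)) * f y)
        = (∑ y : {x : DVtx m // ∀ b, x ≠ base m b}, dirMat m α x y * f y)
          - (∑ y : {x : DVtx m // ∀ b, x ≠ base m b}, (if x = y then (1:ℂ) else 0) * f y) from by
      rw [← Finset.sum_sub_distrib]; exact Finset.sum_congr rfl fun y _ => by ring]
    rw [show (∑ y : {x : DVtx m // ∀ b, x ≠ base m b}, (if x = y then (1:ℂ) else 0) * f y)
        = f x from by
      rw [Finset.sum_congr rfl (fun y _ => by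
        rw [show ((if x = y then (1:ℂ) else 0) * f y) = (if x = y then f y else 0) from by
          split <;> simp])]
      rw [Finset.sum_ite_eq Finset.univ x f]; simp]
    have : (∑ y : {x : DVtx m // ∀ b, x ≠ base m b}, dirMat m α x y * f y)
        = magOp m α (extI m f) x.val := by
      rw [dirMat]
      rw [show (∑ y : {x : DVtx m // ∀ b, x ≠ base m b},
            (magMat m α).submatrix Subtype.val Subtype.val x y * f y)
          = ∑ y : {x : DVtx m // ∀ b, x ≠ base m b}, magMat m α x.val y.val * f y from rfl]
      rw [sum_extI m f (fun z => magMat m α x.val z)]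
      exact sum_magMat m α (extI m f) x.val
    rw [this, magOp_eq]
    have hdeg : (ddeg m x.val : ℂ) ≠ 0 := Nat.cast_ne_zero.mpr (ddeg_pos m x.val).ne'
    rw [mul_sub, ← mul_assoc, inv_mul_cancel₀ hdeg, one_mul, extI_interior]
    ring
  constructor
  · intro h x
    have h0 := congrFun h x
    rw [hmv x] at h0
    have hdeg : (-(ddeg m x.val : ℂ)⁻¹) ≠ 0 := by
      simp only [ne_eq, neg_eq_zero, inv_eq_zero]
      exact Nat.cast_ne_zero.mpr (ddeg_pos m x.val).ne'
    exact (mul_eq_zero.mp h0).resolve_left hdeg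
  · intro h
    funext x
    rw [hmv x, h x, mul_zero]
    rfl

/-- Coefficient row of the equation at an old interior vertex, in the new-vertex unknowns. -/
noncomputable def rowC (n : ℕ) (α : DEdge (n+1) → ℝ) (x : DVtx n) (p : DEdge n × Bool) : ℂ :=
  (if dsrc n p.1 = x then
      (if p.2 then Complex.exp (-(Complex.I * α (Fin.snoc p.1 3)))
       else Complex.exp (Complex.I * α (Fin.snoc p.1 0))) else 0) +
  (if dtgt n p.1 = x then
      (if p.2 then Complex.exp (Complex.I * α (Fin.snoc p.1 2))
       else Complex.exp (-(Complex.I * α (Fin.snoc p.1 1)))) else 0)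

lemma adjSum_old (n : ℕ) (α : DEdge (n+1) → ℝ) (x : DVtx n) (g : DVtx (n+1) → ℂ) :
    adjSum (n+1) α (oldV x) g = ∑ p : DEdge n × Bool, rowC n α x p * g (newV p) := by
  rw [adjSum, sum_edges]
  rw [Fintype.sum_prod_type]
  refine Finset.sum_congr rfl fun w _ => ?_
  have e0 : dEnds (n+1) (Fin.snoc w 0) = (oldV (dsrc n w), newV (w, false)) := by
    rw [dEnds_snoc]; simp
  have e1 : dEnds (n+1) (Fin.snoc w 1) = (newV (w, false), oldV (dtgt n w)) := by
    rw [dEnds_snoc]; simp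
  have e2 : dEnds (n+1) (Fin.snoc w 2) = (oldV (dtgt n w), newV (w, true)) := by
    rw [dEnds_snoc]; simp
  have e3 : dEnds (n+1) (Fin.snoc w 3) = (newV (w, true), oldV (dsrc n w)) := by
    rw [dEnds_snoc]; simp
  have hs0 : dsrc (n+1) (Fin.snoc w 0) = oldV (dsrc n w) := by rw [dsrc, e0]
  have ht0 : dtgt (n+1) (Fin.snoc w 0) = newV (w, false) := by rw [dtgt, e0]
  have hs1 : dsrc (n+1) (Fin.snoc w 1) = newV (w, false) := by rw [dsrc, e1]
  have ht1 : dtgt (n+1) (Fin.snoc w 1) = oldV (dtgt n w) := by rw [dtgt, e1]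
  have hs2 : dsrc (n+1) (Fin.snoc w 2) = oldV (dtgt n w) := by rw [dsrc, e2]
  have ht2 : dtgt (n+1) (Fin.snoc w 2) = newV (w, true) := by rw [dtgt, e2]
  have hs3 : dsrc (n+1) (Fin.snoc w 3) = newV (w, true) := by rw [dsrc, e3]
  have ht3 : dtgt (n+1) (Fin.snoc w 3) = oldV (dsrc n w) := by rw [dtgt, e3]
  rw [hs0, ht0, hs1, ht1, hs2, ht2, hs3, ht3]
  rw [Fintype.sum_bool]
  have hinj : ∀ u v : DVtx n, (oldV u = oldV v) ↔ u = v :=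
    fun u v => ⟨fun h => Sum.inl.inj h, fun h => by rw [h]⟩
  have hne1 : ∀ (p : DEdge n × Bool) (v : DVtx n), newV p = oldV v ↔ False :=
    fun p v => ⟨fun h => Sum.inr_ne_inl h, False.elim⟩
  simp only [rowC, hinj, hne1, if_false]
  by_cases h1 : dsrc n w = x <;> by_cases h2 : dtgt n w = x <;> simp [h1, h2] <;> ring

lemma adjSum_new (n : ℕ) (α : DEdge (n+1) → ℝ) (w₀ : DEdge n) (b : Bool) (g : DVtx (n+1) → ℂ) :
    adjSum (n+1) α (newV (w₀, b)) g =
      if b then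
        Complex.exp (Complex.I * α (Fin.snoc w₀ 3)) * g (oldV (dsrc n w₀)) +
        Complex.exp (-(Complex.I * α (Fin.snoc w₀ 2))) * g (oldV (dtgt n w₀))
      else
        Complex.exp (-(Complex.I * α (Fin.snoc w₀ 0))) * g (oldV (dsrc n w₀)) +
        Complex.exp (Complex.I * α (Fin.snoc w₀ 1)) * g (oldV (dtgt n w₀)) := by
  rw [adjSum, sum_edges]
  have hinj : ∀ u v : DEdge n × Bool, (newV u = newV v) ↔ u = v :=
    fun u v => ⟨fun h => Sum.inr.inj h, fun h => by rw [h]⟩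
  have hne1 : ∀ (v : DVtx n) (p : DEdge n × Bool), oldV v = newV p ↔ False :=
    fun v p => ⟨fun h => Sum.inl_ne_inr h, False.elim⟩
  rw [show (∑ w : DEdge n,
      ((fun e => (if dsrc (n+1) e = newV (w₀, b) then Complex.exp (Complex.I * α e) * g (dtgt (n+1) e) else 0) +
        (if dtgt (n+1) e = newV (w₀, b) then Complex.exp (-(Complex.I * α e)) * g (dsrc (n+1) e) else 0)) (Fin.snoc w 0) +
       (fun e => (if dsrc (n+1) e = newV (w₀, b) then Complex.exp (Complex.I * α e) * g (dtgt (n+1) e) else 0) +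
        (if dtgt (n+1) e = newV (w₀, b) then Complex.exp (-(Complex.I * α e)) * g (dsrc (n+1) e) else 0)) (Fin.snoc w 1) +
       (fun e => (if dsrc (n+1) e = newV (w₀, b) then Complex.exp (Complex.I * α e) * g (dtgt (n+1) e) else 0) +
        (if dtgt (n+1) e = newV (w₀, b) then Complex.exp (-(Complex.I * α e)) * g (dsrc (n+1) e) else 0)) (Fin.snoc w 2) +
       (fun e => (if dsrc (n+1) e = newV (w₀, b) then Complex.exp (Complex.I * α e) * g (dtgt (n+1) e) else 0) +
        (if dtgt (n+1) e = newV (w₀, b) then Complex.exp (-(Complex.I * α e)) * g (dsrc (n+1) e) else 0)) (Fin.snoc w 3)))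
    = ∑ w : DEdge n, (if w = w₀ then
        (if b then
          Complex.exp (Complex.I * α (Fin.snoc w₀ 3)) * g (oldV (dsrc n w₀)) +
          Complex.exp (-(Complex.I * α (Fin.snoc w₀ 2))) * g (oldV (dtgt n w₀))
        else
          Complex.exp (-(Complex.I * α (Fin.snoc w₀ 0))) * g (oldV (dsrc n w₀)) +
          Complex.exp (Complex.I * α (Fin.snoc w₀ 1)) * g (oldV (dtgt n w₀))) else 0) from ?_]
  · rw [Finset.sum_ite_eq' Finset.univ w₀]; simp
  refine Finset.sum_congr rfl fun w _ => ?_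
  have e0 : dEnds (n+1) (Fin.snoc w 0) = (oldV (dsrc n w), newV (w, false)) := by
    rw [dEnds_snoc]; simp
  have e1 : dEnds (n+1) (Fin.snoc w 1) = (newV (w, false), oldV (dtgt n w)) := by
    rw [dEnds_snoc]; simp
  have e2 : dEnds (n+1) (Fin.snoc w 2) = (oldV (dtgt n w), newV (w, true)) := by
    rw [dEnds_snoc]; simp
  have e3 : dEnds (n+1) (Fin.snoc w 3) = (newV (w, true), oldV (dsrc n w)) := by
    rw [dEnds_snoc]; simp
  simp only [dsrc, dtgt, e0, e1, e2, e3]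
  simp only [hinj, hne1, if_false, Prod.mk.injEq]
  by_cases hw : w = w₀
  · subst hw
    cases b <;> simp <;> ring
  · simp [hw]

noncomputable def Cmat (n : ℕ) (α : DEdge (n+1) → ℝ) :
    Matrix {x : DVtx n // ∀ b, x ≠ base n b} (DEdge n × Bool) ℂ :=
  Matrix.of fun x p => rowC n α x.val p

lemma oldV_interior {n : ℕ} {x : DVtx n} (h : ∀ b, (oldV x : DVtx (n+1)) ≠ base (n+1) b) :
    ∀ b, x ≠ base n b := fun b hb => h b (by rw [hb]; rfl)

lemma oldV_interior' {n : ℕ} {x : DVtx n} (h : ∀ b, x ≠ base n b) :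
    ∀ b, (oldV x : DVtx n ⊕ (DEdge n × Bool)) ≠ base (n+1) b :=
  fun b hb => h b (Sum.inl.inj hb)

lemma newV_interior {n : ℕ} (p : DEdge n × Bool) :
    ∀ b, (newV p : DVtx n ⊕ (DEdge n × Bool)) ≠ base (n+1) b :=
  fun b hb => Sum.inr_ne_inl hb

/-- The exponential is never zero, so a two-term relation gives a zero-iff. -/
lemma two_term_iff {c d : ℂ} {u v : ℂ} (hc : c ≠ 0) (hd : d ≠ 0)
    (h : c * u + d * v = 0) : u = 0 ↔ v = 0 := by
  constructor
  · intro hu; rw [hu, mul_zero, zero_add] at h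
    exact (mul_eq_zero.mp h).resolve_left hd
  · intro hv; rw [hv, mul_zero, add_zero] at h
    exact (mul_eq_zero.mp h).resolve_left hc

lemma ker_equiv_aux (n : ℕ) (α : DEdge (n+1) → ℝ)
    (f : {x : DVtx (n+1) // ∀ b, x ≠ base (n+1) b} → ℂ)
    (hf : f ∈ LinearMap.ker (Matrix.toLin' (dirMat (n+1) α - (1 : ℂ) • 1))) :
    ∀ z : DVtx n, extI (n+1) f (oldV z) = 0 := by
  have hker := (mem_ker_iff (n+1) α f).mp hf
  refine conn n {z | extI (n+1) f (oldV z) = 0} (fun b => ?_) (fun w => ?_)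
  · show extI (n+1) f (oldV (base n b)) = 0
    exact extI_base (n+1) f b
  · have h0 := hker ⟨newV (w, false), newV_interior _⟩
    rw [adjSum_new] at h0
    simp only [if_false, Bool.false_eq_true] at h0
    exact two_term_iff (Complex.exp_ne_zero _) (Complex.exp_ne_zero _) h0

lemma extI_newV {n : ℕ} (f : {x : DVtx (n+1) // ∀ b, x ≠ base (n+1) b} → ℂ)
    (p : DEdge n × Bool) : extI (n+1) f (newV p) = f ⟨newV p, newV_interior p⟩ := by
  rw [extI, dif_pos (newV_interior p)]

lemma mem_kerC (n : ℕ) (α : DEdge (n+1) → ℝ)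
    (f : {x : DVtx (n+1) // ∀ b, x ≠ base (n+1) b} → ℂ)
    (hf : f ∈ LinearMap.ker (Matrix.toLin' (dirMat (n+1) α - (1 : ℂ) • 1))) :
    (fun p => f ⟨newV p, newV_interior p⟩) ∈ LinearMap.ker (Cmat n α).mulVecLin := by
  have hker := (mem_ker_iff (n+1) α f).mp hf
  rw [LinearMap.mem_ker]
  funext x
  have h := hker ⟨oldV x.val, oldV_interior' x.2⟩
  rw [adjSum_old] at h
  rw [Matrix.mulVecLin_apply, Matrix.mulVec, dotProduct]
  show (∑ p : DEdge n × Bool, Cmat n α x p * f ⟨newV p, newV_interior p⟩) = 0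
  rw [← h]
  refine Finset.sum_congr rfl fun p _ => ?_
  rw [extI_newV, Cmat]
  rfl

noncomputable def Phi (n : ℕ) (α : DEdge (n+1) → ℝ) :
    LinearMap.ker (Matrix.toLin' (dirMat (n+1) α - (1 : ℂ) • 1)) →ₗ[ℂ]
      LinearMap.ker (Cmat n α).mulVecLin where
  toFun f := ⟨fun p => f.val ⟨newV p, newV_interior p⟩, mem_kerC n α f.val f.2⟩
  map_add' f g := rfl
  map_smul' c f := rfl

lemma Phi_injective (n : ℕ) (α : DEdge (n+1) → ℝ) : Function.Injective (Phi n α) := by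
  intro f g hfg
  have h : ∀ p : DEdge n × Bool, f.val ⟨newV p, newV_interior p⟩ = g.val ⟨newV p, newV_interior p⟩ :=
    fun p => congrFun (congrArg Subtype.val hfg) p
  have hd : ∀ z : DVtx n, extI (n+1) (f.val - g.val) (oldV z) = 0 := by
    refine ker_equiv_aux n α (f.val - g.val) ?_
    exact sub_mem f.2 g.2
  apply Subtype.ext
  funext x
  obtain ⟨xv, hx⟩ := x
  have : f.val - g.val = 0 → f.val ⟨xv, hx⟩ = g.val ⟨xv, hx⟩ := fun h0 => by
    have := congrFun h0 ⟨xv, hx⟩; simpa [sub_eq_zero] using this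
  rcases xv with z | p
  · have h' : ∀ b, z ≠ base n b := oldV_interior hx
    have := hd z
    rw [extI, dif_pos (oldV_interior' h')] at this
    have heq : (⟨oldV z, oldV_interior' h'⟩ : {x : DVtx (n+1) // ∀ b, x ≠ base (n+1) b})
        = ⟨Sum.inl z, hx⟩ := Subtype.ext rfl
    rw [heq] at this
    simpa [sub_eq_zero] using this
  · have heq : (⟨newV p, newV_interior p⟩ : {x : DVtx (n+1) // ∀ b, x ≠ base (n+1) b})
        = ⟨Sum.inr p, hx⟩ := Subtype.ext rfl
    rw [← heq]
    exact h p

lemma Phi_surjective (n : ℕ) (α : DEdge (n+1) → ℝ) : Function.Surjective (Phi n α) := by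
  intro h
  classical
  set F : {x : DVtx (n+1) // ∀ b, x ≠ base (n+1) b} → ℂ :=
    fun x => Sum.elim (fun _ : DVtx n => (0:ℂ)) (fun p => h.val p) x.val with hF
  have hextold : ∀ z : DVtx n, extI (n+1) F (oldV z) = 0 := by
    intro z
    by_cases hz : ∀ b, (oldV z : DVtx (n+1)) ≠ base (n+1) b
    · rw [extI, dif_pos hz]; rfl
    · rw [extI, dif_neg hz]
  have hextnew : ∀ p : DEdge n × Bool, extI (n+1) F (newV p) = h.val p := by
    intro p
    rw [extI, dif_pos (newV_interior p)]; rfl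
  have hFker : F ∈ LinearMap.ker (Matrix.toLin' (dirMat (n+1) α - (1 : ℂ) • 1)) := by
    rw [mem_ker_iff]
    rintro ⟨xv, hx⟩
    rcases xv with z | p
    · show adjSum (n+1) α (oldV z) (extI (n+1) F) = 0
      rw [adjSum_old]
      have hC := congrFun (LinearMap.mem_ker.mp h.2) ⟨z, oldV_interior hx⟩
      rw [Matrix.mulVecLin_apply, Matrix.mulVec, dotProduct] at hC
      rw [show (0 : {x : DVtx n // ∀ b, x ≠ base n b} → ℂ) ⟨z, oldV_interior hx⟩ = 0 from rfl] at hC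
      rw [← hC]
      exact Finset.sum_congr rfl fun p _ => by rw [hextnew]; rfl
    · show adjSum (n+1) α (newV p) (extI (n+1) F) = 0
      obtain ⟨w, b⟩ := p
      rw [adjSum_new, hextold, hextold]
      cases b <;> simp
  refine ⟨⟨F, hFker⟩, ?_⟩
  apply Subtype.ext
  funext p
  rfl

lemma ker_equiv (n : ℕ) (α : DEdge (n+1) → ℝ) :
    Module.finrank ℂ (LinearMap.ker (Matrix.toLin' (dirMat (n+1) α - (1 : ℂ) • 1))) =
      Module.finrank ℂ (LinearMap.ker (Cmat n α).mulVecLin) :=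
  LinearEquiv.finrank_eq (LinearEquiv.ofBijective (Phi n α)
    ⟨Phi_injective n α, Phi_surjective n α⟩)

open Matrix
open scoped ComplexOrder

lemma sum_int_collapse (n : ℕ) (s : DVtx n) (G : ℂ) (c : {x : DVtx n // ∀ b, x ≠ base n b} → ℂ) :
    ∑ x : {x : DVtx n // ∀ b, x ≠ base n b}, (if s = x.val then G * c x else 0)
      = G * extI n c s := by
  classical
  by_cases h : ∀ b, s ≠ base n b
  · rw [extI, dif_pos h]
    rw [Finset.sum_eq_single (⟨s, h⟩ : {x : DVtx n // ∀ b, x ≠ base n b})]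
    · rw [if_pos rfl]
    · intro x _ hx
      rw [if_neg (fun hs => hx (Subtype.ext hs.symm))]
    · intro hmem; exact absurd (Finset.mem_univ _) hmem
  · rw [extI, dif_neg h, mul_zero]
    refine Finset.sum_eq_zero fun x _ => ?_
    rw [if_neg (fun hs => h (fun b => by rw [hs]; exact x.2 b))]

lemma CH_ker (n : ℕ) (α : DEdge (n+1) → ℝ)
    (c : {x : DVtx n // ∀ b, x ≠ base n b} → ℂ)
    (hc : (Cmat n α)ᴴ.mulVecLin c = 0) : c = 0 := by
  have heq : ∀ p : DEdge n × Bool,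
      star ((if p.2 then Complex.exp (-(Complex.I * α (Fin.snoc p.1 3)))
             else Complex.exp (Complex.I * α (Fin.snoc p.1 0)))) * extI n c (dsrc n p.1) +
      star ((if p.2 then Complex.exp (Complex.I * α (Fin.snoc p.1 2))
             else Complex.exp (-(Complex.I * α (Fin.snoc p.1 1))))) * extI n c (dtgt n p.1) = 0 := by
    intro p
    have h := congrFun hc p
    rw [Matrix.mulVecLin_apply, Matrix.mulVec, dotProduct] at h
    rw [show (0 : (DEdge n × Bool) → ℂ) p = 0 from rfl] at h
    rw [← sum_int_collapse n (dsrc n p.1) _ c, ← sum_int_collapse n (dtgt n p.1) _ c,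
      ← Finset.sum_add_distrib]
    refine Eq.trans (Finset.sum_congr rfl fun x _ => ?_) h
    rw [Matrix.conjTranspose_apply, Cmat, Matrix.of_apply, rowC, star_add]
    rw [add_mul]
    congr 1
    · by_cases h1 : dsrc n p.1 = x.val <;> simp [h1]
    · by_cases h2 : dtgt n p.1 = x.val <;> simp [h2]
  have hall : ∀ z : DVtx n, extI n c z = 0 := by
    refine conn n {z | extI n c z = 0} (fun b => extI_base n c b) (fun w => ?_)
    have h := heq (w, false)
    simp only [Bool.false_eq_true, if_false] at h
    exact two_term_iff (by simp [Complex.exp_ne_zero]) (by simp [Complex.exp_ne_zero]) h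
  funext x
  have := hall x.val
  rw [extI_interior] at this
  exact this

lemma rank_Cmat (n : ℕ) (α : DEdge (n+1) → ℝ) :
    (Cmat n α).rank = Fintype.card {x : DVtx n // ∀ b, x ≠ base n b} := by
  rw [← Matrix.rank_conjTranspose]
  rw [Matrix.rank]
  rw [LinearMap.finrank_range_of_inj]
  · exact Module.finrank_fintype_fun_eq_card ℂ
  · intro c d hcd
    have : (Cmat n α)ᴴ.mulVecLin (c - d) = 0 := by
      rw [map_sub, hcd, sub_self]
    have := CH_ker n α (c - d) this
    rwa [sub_eq_zero] at this


/-- For a compatible family of 1-forms on the diamond hierarchical graphs, the eigenvalue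
`1` of the Dirichlet magnetic operator `D_m` has multiplicity exactly `(1/3)(4^m + 2)`. -/
theorem stmt8 (βs : ℕ → ℝ) (a : (m : ℕ) → DEdge m → ℝ) (hcomp : Compatible βs a)
    (m : ℕ) (hm : 1 ≤ m) :
    3 * Module.finrank ℂ
        (LinearMap.ker (Matrix.toLin' (dirMat m (a m) - (1 : ℂ) • 1))) =
      4 ^ m + 2 := by
  obtain ⟨n, rfl⟩ : ∃ n, m = n + 1 := ⟨m - 1, (Nat.succ_pred_eq_of_pos hm).symm⟩
  rw [ker_equiv n (a (n + 1))]
  have hrn := LinearMap.finrank_range_add_finrank_ker ((Cmat n (a (n + 1))).mulVecLin)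
  have hdom : Module.finrank ℂ ((DEdge n × Bool) → ℂ) = 2 * 4 ^ n := by
    rw [Module.finrank_fintype_fun_eq_card ℂ]
    simp [Fintype.card_prod, Fintype.card_fun]
    ring
  rw [hdom] at hrn
  have hrank : Module.finrank ℂ (LinearMap.range (Cmat n (a (n + 1))).mulVecLin)
      = Fintype.card {x : DVtx n // ∀ b, x ≠ base n b} := by
    have := rank_Cmat n (a (n + 1))
    rwa [Matrix.rank] at this
  rw [hrank] at hrn
  have h1 := card_int n
  have h2 := card_DVtx n
  have h3 : (4 : ℕ) ^ (n + 1) = 4 * 4 ^ n := by rw [pow_succ]; ring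
  omega
end
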